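/- Let A = D + L + Lᵀ be symmetric positive definite, B ∈ ℝ^{n×β}, Γ symmetric positive definite, M^{SGS} := A + LD⁻¹Lᵀ, and M̃^{SGS} := A + BΓ⁻¹Bᵀ + L(D + BΓ⁻¹Bᵀ)⁻¹Lᵀ. Then for every x ∈ ℝⁿ, xᵀM̃^{SGS}x ≤ xᵀBΓ⁻¹Bᵀx + xᵀM^{SGS}x. Consequently ‖M̃^{SGS}‖₂ ≤ ‖BΓ⁻¹Bᵀ‖₂ + ‖M^{SGS}‖₂. -/

import Mathlib

open Matrix

/-- The spectral (ℓ²-operator) norm of a real square matrix. -/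
noncomputable def specNorm {n : ℕ} (M : Matrix (Fin n) (Fin n) ℝ) : ℝ :=
  ‖(Matrix.toEuclideanCLM (𝕜 := ℝ) M : EuclideanSpace ℝ (Fin n) →L[ℝ] EuclideanSpace ℝ (Fin n))‖

local notation "⟪" x ", " y "⟫" => @inner ℝ _ _ x y

section OpNorm
variable {E : Type*} [NormedAddCommGroup E] [InnerProductSpace ℝ E] [CompleteSpace E]

lemma myCS {T : E →L[ℝ] E} (hT : T.IsPositive) (u v : E) :
    ⟪T u, v⟫ ^ 2 ≤ ⟪T u, u⟫ * ⟪T v, v⟫ := by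
  have hsymT := (ContinuousLinearMap.isSelfAdjoint_iff_isSymmetric.mp hT.isSelfAdjoint)
  have hsym : ∀ a b : E, ⟪T a, b⟫ = ⟪T b, a⟫ := fun a b => by
    exact (hsymT a b).trans (real_inner_comm (T b) a)
  have hnn : ∀ a : E, 0 ≤ ⟪T a, a⟫ := fun a => by
    simpa [ContinuousLinearMap.reApplyInnerSelf] using hT.2 a
  have hq : ∀ t : ℝ, 0 ≤ ⟪T v, v⟫ * (t * t) + 2 * ⟪T u, v⟫ * t + ⟪T u, u⟫ := by
    intro t
    have h0 := hnn (u + t • v)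
    have expand : ⟪T (u + t • v), u + t • v⟫
        = ⟪T v, v⟫ * (t * t) + 2 * ⟪T u, v⟫ * t + ⟪T u, u⟫ := by
      rw [map_add, T.map_smul, inner_add_left, inner_add_right, inner_add_right,
        real_inner_smul_left, real_inner_smul_right, real_inner_smul_left,
        real_inner_smul_right, hsym v u]
      ring
    linarith [expand ▸ h0]
  have hd := discrim_le_zero hq
  rw [discrim] at hd
  nlinarith [hd]

lemma my_opnorm_le {T S : E →L[ℝ] E} (hT : T.IsPositive)
    (h : ∀ x, ⟪T x, x⟫ ≤ ⟪S x, x⟫) : ‖T‖ ≤ ‖S‖ := by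
  have hnn : ∀ a : E, 0 ≤ ⟪T a, a⟫ := fun a => by
    simpa [ContinuousLinearMap.reApplyInnerSelf] using hT.2 a
  refine ContinuousLinearMap.opNorm_le_bound _ (norm_nonneg S) fun x => ?_
  have hb : ∀ y : E, ⟪T y, y⟫ ≤ ‖S‖ * ‖y‖ ^ 2 := by
    intro y
    calc ⟪T y, y⟫ ≤ ⟪S y, y⟫ := h y
      _ ≤ ‖S y‖ * ‖y‖ := real_inner_le_norm _ _
      _ ≤ (‖S‖ * ‖y‖) * ‖y‖ := by
          gcongr; exact S.le_opNorm y
      _ = ‖S‖ * ‖y‖ ^ 2 := by ring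
  have h1 := myCS hT x (T x)
  have h2 := hb x
  have h3 := hb (T x)
  have h4 : ⟪T x, T x⟫ = ‖T x‖ ^ 2 := real_inner_self_eq_norm_sq _
  rw [h4] at h1
  by_cases hx0 : ‖T x‖ = 0
  · rw [hx0]; positivity
  · have hpos : 0 < ‖T x‖ := lt_of_le_of_ne (norm_nonneg _) (Ne.symm hx0)
    have key : ‖T x‖ ^ 2 ≤ (‖S‖ * ‖x‖) ^ 2 := by
      nlinarith [hnn x, hnn (T x), norm_nonneg x, norm_nonneg S]
    nlinarith [norm_nonneg x, norm_nonneg S, mul_nonneg (norm_nonneg S) (norm_nonneg x)]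

end OpNorm

section Matrices
variable {n : ℕ}

lemma inner_clm (M : Matrix (Fin n) (Fin n) ℝ) (x : EuclideanSpace ℝ (Fin n)) :
    ⟪(toEuclideanCLM (𝕜 := ℝ) M) x, x⟫
      = (WithLp.equiv 2 (Fin n → ℝ) x) ⬝ᵥ M.mulVec (WithLp.equiv 2 (Fin n → ℝ) x) := by
  have hx : ∀ i, (toEuclideanCLM (𝕜 := ℝ) M) x i
      = (M.mulVec (WithLp.equiv 2 (Fin n → ℝ) x)) i := by
    intro i
    have hi := congrFun (Matrix.ofLp_toEuclideanCLM (𝕜 := ℝ) M x) i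
    exact hi
  simp only [PiLp.inner_apply, RCLike.inner_apply, conj_trivial, hx, dotProduct]
  exact Finset.sum_congr rfl fun i _ => rfl

lemma isPositive_of_posSemidef {M : Matrix (Fin n) (Fin n) ℝ} (hM : M.PosSemidef) :
    (toEuclideanCLM (𝕜 := ℝ) M).IsPositive := by
  rw [ContinuousLinearMap.isPositive_def']
  constructor
  · show star _ = _
    rw [← map_star]
    congr 1
    rw [Matrix.star_eq_conjTranspose]
    exact hM.1
  · intro x
    have h0 := hM.dotProduct_mulVec_nonneg (WithLp.equiv 2 (Fin n → ℝ) x)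
    have h1 : (0:ℝ) ≤ ⟪(toEuclideanCLM (𝕜 := ℝ) M) x, x⟫ := by
      rw [inner_clm]; simpa using h0
    simpa [ContinuousLinearMap.reApplyInnerSelf] using h1

lemma sym_dot {M : Matrix (Fin n) (Fin n) ℝ} (hM : Mᵀ = M) (a b : Fin n → ℝ) :
    a ⬝ᵥ M.mulVec b = b ⬝ᵥ M.mulVec a := by
  rw [Matrix.dotProduct_mulVec, ← Matrix.mulVec_transpose, hM, dotProduct_comm]

lemma inv_quad_le {M S : Matrix (Fin n) (Fin n) ℝ} (hM : M.PosDef) (hS : S.PosSemidef)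
    (y : Fin n → ℝ) :
    y ⬝ᵥ (M + S)⁻¹.mulVec y ≤ y ⬝ᵥ M⁻¹.mulVec y := by
  have hMS : (M + S).PosDef := hM.add_posSemidef hS
  have hMsym : Mᵀ = M := by
    have := hM.1; rwa [Matrix.IsHermitian, conjTranspose_eq_transpose_of_trivial] at this
  set u := (M + S)⁻¹.mulVec y with hu
  have hyu : (M + S).mulVec u = y := by
    rw [hu, Matrix.mulVec_mulVec, Matrix.mul_nonsing_inv _ (isUnit_iff_ne_zero.mpr hMS.det_pos.ne'), Matrix.one_mulVec]
  set z := M⁻¹.mulVec y with hz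
  have hyz : M.mulVec z = y := by
    rw [hz, Matrix.mulVec_mulVec, Matrix.mul_nonsing_inv _ (isUnit_iff_ne_zero.mpr hM.det_pos.ne'), Matrix.one_mulVec]
  have hw : 0 ≤ (u - z) ⬝ᵥ M.mulVec (u - z) := by
    simpa using hM.posSemidef.dotProduct_mulVec_nonneg (u - z)
  have hSu : 0 ≤ u ⬝ᵥ S.mulVec u := by simpa using hS.dotProduct_mulVec_nonneg u
  have expand : (u - z) ⬝ᵥ M.mulVec (u - z)
      = u ⬝ᵥ M.mulVec u - 2 * (u ⬝ᵥ y) + y ⬝ᵥ M⁻¹.mulVec y := by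
    rw [Matrix.mulVec_sub, dotProduct_sub, sub_dotProduct, sub_dotProduct]
    have h1 : u ⬝ᵥ M.mulVec z = u ⬝ᵥ y := by rw [hyz]
    have h2 : z ⬝ᵥ M.mulVec u = u ⬝ᵥ y := by rw [sym_dot hMsym, hyz]
    have h3 : z ⬝ᵥ M.mulVec z = y ⬝ᵥ M⁻¹.mulVec y := by
      rw [hyz]; rw [hz, dotProduct_comm]
    rw [h1, h2, h3]; ring
  have huy : u ⬝ᵥ y = u ⬝ᵥ M.mulVec u + u ⬝ᵥ S.mulVec u := by
    rw [← hyu, Matrix.add_mulVec, dotProduct_add]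
  have hLHS : y ⬝ᵥ (M + S)⁻¹.mulVec y = u ⬝ᵥ y := by
    rw [← hu, dotProduct_comm]
  rw [hLHS]
  nlinarith [expand ▸ hw]

end Matrices

/-- With `M^{SGS} = A + L D⁻¹ Lᵀ` and
`M̃^{SGS} = A + B Γ⁻¹ Bᵀ + L (D + B Γ⁻¹ Bᵀ)⁻¹ Lᵀ`, for every `x`,
`xᵀ M̃^{SGS} x ≤ xᵀ B Γ⁻¹ Bᵀ x + xᵀ M^{SGS} x`, and consequently
`‖M̃^{SGS}‖₂ ≤ ‖B Γ⁻¹ Bᵀ‖₂ + ‖M^{SGS}‖₂`. -/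
theorem low_rank_sgs_norm_bound {n β : ℕ}
    (A D L : Matrix (Fin n) (Fin n) ℝ) (B : Matrix (Fin n) (Fin β) ℝ)
    (Γ : Matrix (Fin β) (Fin β) ℝ)
    (hA : A.PosDef) (hsplit : A = D + L + Lᵀ)
    (hD : D.IsDiag) (hDpd : D.PosDef)
    (hL : ∀ i j : Fin n, i ≤ j → L i j = 0)
    (hΓ : Γ.PosDef) (hΓs : Γ.IsSymm) :
    (∀ x : Fin n → ℝ,
        x ⬝ᵥ ((A + B * Γ⁻¹ * Bᵀ + L * (D + B * Γ⁻¹ * Bᵀ)⁻¹ * Lᵀ).mulVec x)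
          ≤ x ⬝ᵥ ((B * Γ⁻¹ * Bᵀ).mulVec x) + x ⬝ᵥ ((A + L * D⁻¹ * Lᵀ).mulVec x)) ∧
      specNorm (A + B * Γ⁻¹ * Bᵀ + L * (D + B * Γ⁻¹ * Bᵀ)⁻¹ * Lᵀ)
        ≤ specNorm (B * Γ⁻¹ * Bᵀ) + specNorm (A + L * D⁻¹ * Lᵀ) := by
  set S := B * Γ⁻¹ * Bᵀ with hSdef
  have hBt : Bᴴ = Bᵀ := conjTranspose_eq_transpose_of_trivial B
  have hSpsd : S.PosSemidef := by
    have := (hΓ.inv.posSemidef).mul_mul_conjTranspose_same B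
    rwa [hBt] at this
  have hLt : ∀ N : Matrix (Fin n) (Fin n) ℝ, N.PosSemidef → (L * N * Lᵀ).PosSemidef := by
    intro N hN
    have := hN.mul_mul_conjTranspose_same L
    rwa [conjTranspose_eq_transpose_of_trivial L] at this
  have hDS : (D + S).PosDef := hDpd.add_posSemidef hSpsd
  have rw1 : ∀ (N : Matrix (Fin n) (Fin n) ℝ) (x : Fin n → ℝ),
      x ⬝ᵥ (L * N * Lᵀ).mulVec x = (Lᵀ.mulVec x) ⬝ᵥ N.mulVec (Lᵀ.mulVec x) := by
    intro N x
    rw [← Matrix.mulVec_mulVec, ← Matrix.mulVec_mulVec, Matrix.dotProduct_mulVec x L,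
      ← Matrix.mulVec_transpose]
  have part1 : ∀ x : Fin n → ℝ,
      x ⬝ᵥ ((A + S + L * (D + S)⁻¹ * Lᵀ).mulVec x)
        ≤ x ⬝ᵥ (S.mulVec x) + x ⬝ᵥ ((A + L * D⁻¹ * Lᵀ).mulVec x) := by
    intro x
    have key : x ⬝ᵥ (L * (D + S)⁻¹ * Lᵀ).mulVec x ≤ x ⬝ᵥ (L * D⁻¹ * Lᵀ).mulVec x := by
      rw [rw1, rw1]
      exact inv_quad_le hDpd hSpsd (Lᵀ.mulVec x)
    simp only [Matrix.add_mulVec, dotProduct_add]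
    linarith
  refine ⟨part1, ?_⟩
  have hM1 : (A + S + L * (D + S)⁻¹ * Lᵀ).PosSemidef :=
    (hA.posSemidef.add hSpsd).add (hLt _ hDS.inv.posSemidef)
  have hT1 := isPositive_of_posSemidef hM1
  have hnorm : specNorm (A + S + L * (D + S)⁻¹ * Lᵀ)
      ≤ ‖toEuclideanCLM (𝕜 := ℝ) (S + (A + L * D⁻¹ * Lᵀ))‖ := by
    apply my_opnorm_le hT1
    intro x
    rw [inner_clm, inner_clm]
    have := part1 (WithLp.equiv 2 (Fin n → ℝ) x)
    simpa only [Matrix.add_mulVec, dotProduct_add] using this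
  calc specNorm (A + S + L * (D + S)⁻¹ * Lᵀ)
      ≤ ‖toEuclideanCLM (𝕜 := ℝ) (S + (A + L * D⁻¹ * Lᵀ))‖ := hnorm
    _ = ‖toEuclideanCLM (𝕜 := ℝ) S + toEuclideanCLM (𝕜 := ℝ) (A + L * D⁻¹ * Lᵀ)‖ := by
        rw [map_add]
    _ ≤ specNorm S + specNorm (A + L * D⁻¹ * Lᵀ) := norm_add_le _ _
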